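/- Let γ : ℝ → ℝ³ be a C² curve with |γ'| ≡ 1, γ(s+ℓ) = γ(s) + a for all s (ℓ > 0, a ∈ ℝ³), and |γ''(s)| ≤ 1/r for all s with r > 0. Let Γ : ℝ → ℝ³ be Lipschitz with |Γ'(s)| = 1 for a.e. s and Γ(s+L) = Γ(s) + a for all s (L > 0). Let σ be a reparametrization of γ for Γ, i.e. σ : ℝ → ℝ is continuous and for all s: σ(s+L) = σ(s) + ℓ, |Γ(s) − γ(σ(s))| < r/8, and (Γ(s) − γ(σ(s))) · γ'(σ(s)) = 0. Then σ is a Lipschitz function on ℝ, and for almost every s ∈ ℝ, σ'(s) = (1 + q(s)/(1 − q(s))) (Γ'(s) · γ'(σ(s))), where q(s) := (Γ(s) − γ(σ(s))) · γ''(σ(s)); in particular, for almost every s, σ'(s) ≤ 1 + (2/r) sup_{τ ∈ ℝ} |Γ(τ) − γ(σ(τ))|. -/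

import Mathlib

noncomputable section
open Real MeasureTheory

/-- `ℝ³` as Euclidean space. -/
abbrev R3 : Type := EuclideanSpace ℝ (Fin 3)

/-- Corollary 3.6: a reparametrization is Lipschitz, formula and
bound for its derivative. -/
theorem stmt3
    (γ : ℝ → R3) (hγ : ContDiff ℝ 2 γ)
    (harcγ : ∀ s : ℝ, ‖deriv γ s‖ = 1)
    (ℓ : ℝ) (hℓ : 0 < ℓ) (a : R3) (hperγ : ∀ s : ℝ, γ (s + ℓ) = γ s + a)
    (r : ℝ) (hr : 0 < r)
    (hcurv : ∀ s : ℝ, ‖deriv (deriv γ) s‖ ≤ 1 / r)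
    (Γ : ℝ → R3) (hΓlip : ∃ K : NNReal, LipschitzWith K Γ)
    (harcΓ : ∀ᵐ s : ℝ ∂volume, ‖deriv Γ s‖ = 1)
    (L : ℝ) (hL : 0 < L) (hperΓ : ∀ s : ℝ, Γ (s + L) = Γ s + a)
    (σ : ℝ → ℝ) (hσc : Continuous σ)
    (hσ : ∀ s : ℝ,
      σ (s + L) = σ s + ℓ ∧
      ‖Γ s - γ (σ s)‖ < r / 8 ∧
      (inner ℝ (Γ s - γ (σ s)) (deriv γ (σ s)) : ℝ) = 0) :
    (∃ K : NNReal, LipschitzWith K σ) ∧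
    (∀ᵐ s : ℝ ∂volume,
      deriv σ s =
        (1 + (inner ℝ (Γ s - γ (σ s)) (deriv (deriv γ) (σ s)) : ℝ) /
            (1 - (inner ℝ (Γ s - γ (σ s)) (deriv (deriv γ) (σ s)) : ℝ))) *
          (inner ℝ (deriv Γ s) (deriv γ (σ s)) : ℝ) ∧
      deriv σ s ≤ 1 + (2 / r) * ⨆ τ : ℝ, ‖Γ τ - γ (σ τ)‖) := by
  obtain ⟨K, hK⟩ := hΓlip
  have hγd : Differentiable ℝ γ := hγ.differentiable two_ne_zero
  have h2 : (2 : WithTop ℕ∞) = 1 + 1 := by norm_num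
  have hγ' : ContDiff ℝ 1 (deriv γ) := (contDiff_succ_iff_deriv.mp (h2 ▸ hγ)).2.2
  have hγ'd : Differentiable ℝ (deriv γ) := hγ'.differentiable one_ne_zero
  have hγlip : LipschitzWith 1 γ := by
    apply lipschitzWith_of_nnnorm_deriv_le hγd
    intro x
    rw [← NNReal.coe_le_coe, coe_nnnorm, NNReal.coe_one, harcγ x]
  -- derivative of the auxiliary function g_c(t) = ⟪c - γ t, γ' t⟫
  have gderiv : ∀ (c : R3) (t : ℝ),
      HasDerivAt (fun u => (inner ℝ (c - γ u) (deriv γ u) : ℝ))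
        ((inner ℝ (c - γ t) (deriv (deriv γ) t) : ℝ) - 1) t := by
    intro c t
    have h1 : HasDerivAt (fun u => c - γ u) (-(deriv γ t)) t :=
      HasDerivAt.const_sub c (hγd t).hasDerivAt
    have h2' : HasDerivAt (deriv γ) (deriv (deriv γ) t) t := (hγ'd t).hasDerivAt
    have := HasDerivAt.inner ℝ h1 h2'
    refine this.congr_deriv ?_
    rw [inner_neg_left, real_inner_self_eq_norm_mul_norm, harcγ t]
    ring
  -- mean value estimate
  have slope : ∀ (c : R3) (x y : ℝ), x < y → (∀ t ∈ Set.Icc x y, ‖c - γ t‖ ≤ 5 * r / 8) →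
      (3 / 8) * (y - x) ≤
        (inner ℝ (c - γ x) (deriv γ x) : ℝ) - (inner ℝ (c - γ y) (deriv γ y) : ℝ) := by
    intro c x y hxy hc
    have hgd : Differentiable ℝ (fun u => (inner ℝ (c - γ u) (deriv γ u) : ℝ)) :=
      fun t => (gderiv c t).differentiableAt
    obtain ⟨u, hu, heq⟩ := exists_hasDerivAt_eq_slope
      (fun u => (inner ℝ (c - γ u) (deriv γ u) : ℝ))
      (fun t => (inner ℝ (c - γ t) (deriv (deriv γ) t) : ℝ) - 1) hxy
      hgd.continuous.continuousOn (fun t _ => gderiv c t)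
    have hub : (inner ℝ (c - γ u) (deriv (deriv γ) u) : ℝ) - 1 ≤ -(3/8) := by
      have h1 : |(inner ℝ (c - γ u) (deriv (deriv γ) u) : ℝ)| ≤ (5 * r / 8) * (1 / r) := by
        refine le_trans (abs_real_inner_le_norm _ _) ?_
        exact mul_le_mul (hc u (Set.mem_Icc_of_Ioo hu)) (hcurv u) (norm_nonneg _)
          (by positivity)
      have h5 : (5 * r / 8) * (1 / r) = 5 / 8 := by field_simp
      rw [h5] at h1
      have := (abs_le.mp h1).2
      linarith
    rw [heq] at hub
    have hyx : 0 < y - x := by linarith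
    rw [div_le_iff₀ hyx] at hub
    linarith
  -- Lemma A : short displacement estimate
  have lemA : ∀ p s : ℝ, |σ s - σ p| ≤ r / 2 → (3/8) * |σ s - σ p| ≤ ‖Γ s - Γ p‖ := by
    intro p s hle
    have hortho_p := (hσ p).2.2
    have hortho_s := (hσ s).2.2
    have hsplit : (inner ℝ (Γ s - γ (σ p)) (deriv γ (σ p)) : ℝ)
        = (inner ℝ (Γ s - Γ p) (deriv γ (σ p)) : ℝ) := by
      have : Γ s - γ (σ p) = (Γ s - Γ p) + (Γ p - γ (σ p)) := by abel
      rw [this, inner_add_left, hortho_p, add_zero]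
    have hib : |(inner ℝ (Γ s - Γ p) (deriv γ (σ p)) : ℝ)| ≤ ‖Γ s - Γ p‖ := by
      refine le_trans (abs_real_inner_le_norm _ _) ?_
      rw [harcγ, mul_one]
    rcases lt_trichotomy (σ p) (σ s) with h | h | h
    · have hc : ∀ t ∈ Set.Icc (σ p) (σ s), ‖Γ s - γ t‖ ≤ 5 * r / 8 := by
        intro t ht
        have h1 : ‖Γ s - γ t‖ ≤ ‖Γ s - γ (σ s)‖ + ‖γ (σ s) - γ t‖ := by
          have := norm_sub_le_norm_sub_add_norm_sub (Γ s) (γ (σ s)) (γ t)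
          linarith [norm_sub_le (Γ s - γ (σ s)) (γ t - γ (σ s))]
        have h2 : ‖γ (σ s) - γ t‖ ≤ |σ s - t| := by
          have := hγlip.dist_le_mul (σ s) t
          rwa [NNReal.coe_one, one_mul, dist_eq_norm, Real.dist_eq] at this
        have h3 : |σ s - t| ≤ σ s - σ p := by
          rw [abs_of_nonneg (by linarith [ht.2])]; linarith [ht.1]
        have h4 : σ s - σ p ≤ r / 2 := by
          have := (abs_le.mp hle).2; linarith [abs_of_pos (show (0:ℝ) < σ s - σ p by linarith)]
        linarith [(hσ s).2.1]
      have := slope (Γ s) (σ p) (σ s) h hc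
      rw [hortho_s, sub_zero, hsplit] at this
      rw [abs_of_pos (show (0:ℝ) < σ s - σ p by linarith)]
      calc (3/8) * (σ s - σ p) ≤ inner ℝ (Γ s - Γ p) (deriv γ (σ p)) := this
        _ ≤ |(inner ℝ (Γ s - Γ p) (deriv γ (σ p)) : ℝ)| := le_abs_self _
        _ ≤ ‖Γ s - Γ p‖ := hib
    · rw [h]; simp [norm_nonneg]
    · have hc : ∀ t ∈ Set.Icc (σ s) (σ p), ‖Γ s - γ t‖ ≤ 5 * r / 8 := by
        intro t ht
        have h1 : ‖Γ s - γ t‖ ≤ ‖Γ s - γ (σ s)‖ + ‖γ (σ s) - γ t‖ := by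
          have := norm_sub_le_norm_sub_add_norm_sub (Γ s) (γ (σ s)) (γ t)
          linarith [norm_sub_le (Γ s - γ (σ s)) (γ t - γ (σ s))]
        have h2 : ‖γ (σ s) - γ t‖ ≤ |σ s - t| := by
          have := hγlip.dist_le_mul (σ s) t
          rwa [NNReal.coe_one, one_mul, dist_eq_norm, Real.dist_eq] at this
        have h3 : |σ s - t| ≤ σ p - σ s := by
          rw [abs_of_nonpos (by linarith [ht.1])]; linarith [ht.2]
        have h4 : σ p - σ s ≤ r / 2 := by
          have := (abs_le.mp hle).1; linarith
        linarith [(hσ s).2.1]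
      have := slope (Γ s) (σ s) (σ p) h hc
      rw [hortho_s, hsplit] at this
      rw [abs_of_neg (show σ s - σ p < 0 by linarith)]
      calc (3/8) * -(σ s - σ p) = (3/8) * (σ p - σ s) := by ring
        _ ≤ -(inner ℝ (Γ s - Γ p) (deriv γ (σ p)) : ℝ) := by linarith
        _ ≤ |(inner ℝ (Γ s - Γ p) (deriv γ (σ p)) : ℝ)| := neg_le_abs _
        _ ≤ ‖Γ s - Γ p‖ := hib
  -- global Lipschitz constant
  set C : ℝ := (8/3) * K + 1 with hCdef
  have hC : 0 < C := by positivity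
  have lemA' : ∀ p s : ℝ, |σ s - σ p| ≤ r / 2 → |σ s - σ p| ≤ C * |s - p| := by
    intro p s h
    have h1 := lemA p s h
    have h2 : ‖Γ s - Γ p‖ ≤ (K : ℝ) * |s - p| := by
      have := hK.dist_le_mul s p
      rwa [dist_eq_norm, Real.dist_eq] at this
    simp only [hCdef]
    linarith [abs_nonneg (s - p)]
  have hδ : 0 < r / (4 * C) := by positivity
  have lemB : ∀ p s : ℝ, p ≤ s → s - p ≤ r / (4 * C) → |σ s - σ p| ≤ C * (s - p) := by
    intro p s hps hlen
    set E := {x : ℝ | x ∈ Set.Icc p s ∧ |σ x - σ p| ≤ r / 2} with hEdef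
    have hEne : E.Nonempty := ⟨p, ⟨le_rfl, hps⟩, by simp; positivity⟩
    have hEc : IsClosed E := by
      apply IsClosed.inter isClosed_Icc
      exact isClosed_le ((hσc.sub continuous_const).abs) continuous_const
    have hEb : BddAbove E := ⟨s, fun x hx => hx.1.2⟩
    set m := sSup E with hmdef
    have hm : m ∈ E := hEc.csSup_mem hEne hEb
    have hkey : ∀ x, x ∈ E → |σ x - σ p| ≤ r / 4 := by
      intro x hx
      have h1 : |σ x - σ p| ≤ C * |x - p| := lemA' p x hx.2
      have h2 : |x - p| ≤ r / (4 * C) := by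
        rw [abs_of_nonneg (by linarith [hx.1.1])]
        linarith [hx.1.2]
      have h3 : C * |x - p| ≤ C * (r / (4 * C)) :=
        mul_le_mul_of_nonneg_left h2 hC.le
      have h4 : C * (r / (4 * C)) = r / 4 := by field_simp
      calc |σ x - σ p| ≤ C * |x - p| := h1
        _ ≤ C * (r / (4 * C)) := h3
        _ = r / 4 := h4
    have hms : m = s := by
      by_contra hne
      have hmlt : m < s := lt_of_le_of_ne hm.1.2 hne
      have hopen : IsOpen {x : ℝ | |σ x - σ p| < r / 2} :=
        isOpen_lt ((hσc.sub continuous_const).abs) continuous_const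
      have hmem : m ∈ {x : ℝ | |σ x - σ p| < r / 2} := by
        have := hkey m hm; simp only [Set.mem_setOf_eq]; linarith
      obtain ⟨ε, hε, hball⟩ := Metric.isOpen_iff.mp hopen m hmem
      set x := min s (m + ε / 2) with hxdef
      have hx1 : m < x := lt_min hmlt (by linarith)
      have hx2 : x ≤ s := min_le_left _ _
      have hx3 : x ∈ Metric.ball m ε := by
        rw [Metric.mem_ball, Real.dist_eq, abs_of_pos (by linarith)]
        have : x ≤ m + ε / 2 := min_le_right _ _
        linarith
      have hxE : x ∈ E := ⟨⟨le_trans hm.1.1 hx1.le, hx2⟩, (hball hx3).le⟩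
      have := le_csSup hEb hxE
      linarith
    have hsE : s ∈ E := hms ▸ hm
    have := lemA' p s hsE.2
    rwa [abs_of_nonneg (by linarith : (0:ℝ) ≤ s - p)] at this
  have lemBn : ∀ n : ℕ, ∀ p s : ℝ, p ≤ s → s - p ≤ n * (r / (4 * C)) →
      |σ s - σ p| ≤ C * (s - p) := by
    intro n
    induction n with
    | zero =>
      intro p s hps hlen
      have : s = p := by push_cast at hlen; linarith
      simp [this]
    | succ n ih =>
      intro p s hps hlen
      by_cases hsmall : s - p ≤ r / (4 * C)
      · exact lemB p s hps hsmall
      · push_neg at hsmall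
        set m := s - r / (4 * C) with hmdef
        have h1 : p ≤ m := by simp only [hmdef]; linarith
        have h2 : m ≤ s := by simp only [hmdef]; linarith
        have hA := ih p m h1 (by push_cast at hlen ⊢; simp only [hmdef]; linarith)
        have hB := lemB m s h2 (by simp only [hmdef]; linarith)
        calc |σ s - σ p| ≤ |σ s - σ m| + |σ m - σ p| := abs_sub_le _ _ _
          _ ≤ C * (s - m) + C * (m - p) := by linarith
          _ = C * (s - p) := by ring
  have main : ∀ x y : ℝ, y ≤ x → |σ x - σ y| ≤ C * (x - y) := by
    intro x y hyx
    obtain ⟨n, hn⟩ := exists_nat_ge ((x - y) / (r / (4 * C)))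
    have hxy : x - y ≤ n * (r / (4 * C)) := by
      rw [div_le_iff₀ hδ] at hn; linarith
    exact lemBn n y x hyx hxy
  have hσlip : LipschitzWith ⟨C, hC.le⟩ σ := by
    apply LipschitzWith.of_dist_le_mul
    intro x y
    rcases le_total y x with h | h
    · have := main x y h
      rw [Real.dist_eq, Real.dist_eq, abs_of_nonneg (by linarith : (0:ℝ) ≤ x - y)]
      exact this
    · have := main y x h
      rw [Real.dist_eq, Real.dist_eq, abs_sub_comm, abs_sub_comm x y,
        abs_of_nonneg (by linarith : (0:ℝ) ≤ y - x)]
      exact this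
  refine ⟨⟨⟨C, hC.le⟩, hσlip⟩, ?_⟩
  -- a.e. derivative formula and bound
  have hQbdd : BddAbove (Set.range fun τ => ‖Γ τ - γ (σ τ)‖) := by
    refine ⟨r / 8, ?_⟩
    rintro _ ⟨τ, rfl⟩
    exact ((hσ τ).2.1).le
  have hσdiff : ∀ᵐ s : ℝ ∂volume, DifferentiableAt ℝ σ s := hσlip.ae_differentiableAt
  have hΓdiff : ∀ᵐ s : ℝ ∂volume, DifferentiableAt ℝ Γ s := hK.ae_differentiableAt
  filter_upwards [hσdiff, hΓdiff, harcΓ] with s hs1 hs2 hs3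
  set q : ℝ := inner ℝ (Γ s - γ (σ s)) (deriv (deriv γ) (σ s)) with hqdef
  set P : ℝ := inner ℝ (deriv Γ s) (deriv γ (σ s)) with hPdef
  clear_value q P
  have hd8 : ‖Γ s - γ (σ s)‖ < r / 8 := (hσ s).2.1
  have hqabs : |q| ≤ ‖Γ s - γ (σ s)‖ * (1 / r) := by
    rw [hqdef]
    refine le_trans (abs_real_inner_le_norm _ _) ?_
    exact mul_le_mul_of_nonneg_left (hcurv _) (norm_nonneg _)
  have hq8 : |q| ≤ 1 / 8 := by
    have h1 : ‖Γ s - γ (σ s)‖ * (1 / r) ≤ (r / 8) * (1 / r) :=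
      mul_le_mul_of_nonneg_right hd8.le (by positivity)
    have h2 : (r / 8) * (1 / r) = 1 / 8 := by field_simp
    linarith
  have h1q : (0:ℝ) < 1 - q := by
    have := (abs_le.mp hq8).2; linarith
  -- chain rule
  have hσ' : HasDerivAt σ (deriv σ s) s := hs1.hasDerivAt
  have hΓ' : HasDerivAt Γ (deriv Γ s) s := hs2.hasDerivAt
  have hγσ : HasDerivAt (fun t => γ (σ t)) (deriv σ s • deriv γ (σ s)) s :=
    HasDerivAt.scomp s (hγd (σ s)).hasDerivAt hσ'
  have hγ'σ : HasDerivAt (fun t => deriv γ (σ t)) (deriv σ s • deriv (deriv γ) (σ s)) s :=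
    HasDerivAt.scomp s (hγ'd (σ s)).hasDerivAt hσ'
  have hf : HasDerivAt (fun t => Γ t - γ (σ t)) (deriv Γ s - deriv σ s • deriv γ (σ s)) s :=
    hΓ'.sub hγσ
  have hphi : HasDerivAt (fun t => (inner ℝ (Γ t - γ (σ t)) (deriv γ (σ t)) : ℝ))
      ((inner ℝ (Γ s - γ (σ s)) (deriv σ s • deriv (deriv γ) (σ s)) : ℝ) +
        (inner ℝ (deriv Γ s - deriv σ s • deriv γ (σ s)) (deriv γ (σ s)) : ℝ)) s :=
    HasDerivAt.inner ℝ hf hγ'σ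
  have hzero : (fun t => (inner ℝ (Γ t - γ (σ t)) (deriv γ (σ t)) : ℝ)) = fun _ => (0:ℝ) :=
    funext fun t => (hσ t).2.2
  have hphi0 : HasDerivAt (fun t => (inner ℝ (Γ t - γ (σ t)) (deriv γ (σ t)) : ℝ)) 0 s := by
    rw [hzero]; exact hasDerivAt_const s 0
  have heq0 : (inner ℝ (Γ s - γ (σ s)) (deriv σ s • deriv (deriv γ) (σ s)) : ℝ) +
      (inner ℝ (deriv Γ s - deriv σ s • deriv γ (σ s)) (deriv γ (σ s)) : ℝ) = 0 :=
    hphi.unique hphi0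
  have hexp : deriv σ s * q + (P - deriv σ s) = 0 := by
    simp only [real_inner_smul_right, inner_sub_left, real_inner_smul_left,
      real_inner_self_eq_norm_mul_norm, harcγ, mul_one] at heq0
    rw [hqdef, hPdef]
    simp only [inner_sub_left]
    linarith [heq0]
  have hkey : deriv σ s * (1 - q) = P := by linarith
  have hσeq : deriv σ s = P / (1 - q) := (eq_div_iff h1q.ne').mpr hkey
  constructor
  · have h1 : 1 + q / (1 - q) = 1 / (1 - q) := by
      field_simp
      ring
    rw [h1, hσeq]; ring
  · have hP1 : P ≤ 1 := by
      have h := real_inner_le_norm (deriv Γ s) (deriv γ (σ s))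
      rw [hs3, harcγ, one_mul] at h
      rw [hPdef]
      exact h
    have hσle : deriv σ s ≤ 1 / (1 - q) := by
      rw [hσeq]
      exact (div_le_div_iff_of_pos_right h1q).mpr hP1
    obtain ⟨Q, hQdef⟩ : ∃ Q : ℝ, Q = ⨆ τ : ℝ, ‖Γ τ - γ (σ τ)‖ := ⟨_, rfl⟩
    rw [← hQdef]
    have hQs : ‖Γ s - γ (σ s)‖ ≤ Q := hQdef ▸ le_ciSup hQbdd s
    have hQ0 : (0:ℝ) ≤ Q := le_trans (norm_nonneg _) hQs
    have hqQ : q * r ≤ Q := by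
      have h2 : |q| * r ≤ ‖Γ s - γ (σ s)‖ := by
        have h3 := mul_le_mul_of_nonneg_right hqabs hr.le
        rwa [mul_assoc, one_div, inv_mul_cancel₀ hr.ne', mul_one] at h3
      have h4 : q * r ≤ |q| * r := mul_le_mul_of_nonneg_right (le_abs_self q) hr.le
      linarith
    have hc0 : (0:ℝ) ≤ Q / r := by positivity
    have hqc : q ≤ Q / r := (le_div_iff₀ hr).mpr hqQ
    have hfin : 1 / (1 - q) ≤ 1 + (2 / r) * Q := by
      have h28 : (2 / r) * Q = 2 * (Q / r) := by ring
      rw [h28, div_le_iff₀ h1q]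
      linarith [mul_le_mul_of_nonneg_left (abs_le.mp hq8).2 hc0, hqc, hc0]
    linarith
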